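/- Let n ≥ 1, let X and Y be n×n complex positive semidefinite matrices satisfying 0 ≤ X ≤ Y ≤ I in the Löwner order, and let α > 1 be a real number. Then ‖X Y^{α−1}‖₁ ≤ Tr Y^α. -/

import Mathlib

open Matrix
open scoped Kronecker ComplexOrder

noncomputable section

/-- Apply a real function to the spectrum of a Hermitian matrix via the spectral
(continuous functional) calculus; junk value `0` if the matrix is not Hermitian. -/
def matFun {n : Type*} [Fintype n] [DecidableEq n] (M : Matrix n n ℂ) (f : ℝ → ℝ) :
    Matrix n n ℂ :=
  if hM : M.IsHermitian then
    (hM.eigenvectorUnitary : Matrix n n ℂ) *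
      Matrix.diagonal (fun i => (f (hM.eigenvalues i) : ℂ)) *
        (star (hM.eigenvectorUnitary : Matrix n n ℂ))
  else 0

/-- Real (spectral) power of a matrix, with the convention `0 ^ β = 0` for `β ≠ 0`. -/
def matRpow {n : Type*} [Fintype n] [DecidableEq n] (M : Matrix n n ℂ) (β : ℝ) :
    Matrix n n ℂ :=
  matFun M (fun x => x ^ β)

/-- Trace norm (Schatten 1-norm): `‖M‖₁ = Tr √(Mᴴ M)`. -/
def traceNorm {n : Type*} [Fintype n] [DecidableEq n] (M : Matrix n n ℂ) : ℝ :=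
  ((((Matrix.posSemidef_conjTranspose_mul_self M).1.eigenvectorUnitary : Matrix n n ℂ) *
      Matrix.diagonal (((↑) : ℝ → ℂ) ∘ (√·) ∘ (Matrix.posSemidef_conjTranspose_mul_self M).1.eigenvalues) *
        (star ((Matrix.posSemidef_conjTranspose_mul_self M).1.eigenvectorUnitary :
          Matrix n n ℂ))).trace).re

/-- Operator norm of a matrix, acting on the Euclidean (ℓ²) space. -/
def opNorm {n : Type*} [Fintype n] [DecidableEq n] (M : Matrix n n ℂ) : ℝ :=
  ‖Matrix.toEuclideanCLM (𝕜 := ℂ) M‖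

/-- Partial trace over the second tensor factor. -/
def ptraceRight {ιA ιB : Type*} [Fintype ιB] (M : Matrix (ιA × ιB) (ιA × ιB) ℂ) :
    Matrix ιA ιA ℂ :=
  Matrix.of fun a a' => ∑ b : ιB, M (a, b) (a', b)

/-- Heisenberg time evolution `ρ(t) = e^{-iHt} ρ e^{iHt}`. -/
def timeEvol {n : Type*} [Fintype n] [DecidableEq n] (H ρ : Matrix n n ℂ) (t : ℝ) :
    Matrix n n ℂ :=
  NormedSpace.exp ((-(Complex.I * (t : ℂ))) • H) * ρ *
    NormedSpace.exp ((Complex.I * (t : ℂ)) • H)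

/-- Von Neumann entropy `S₁(σ) = -Tr(σ log σ)` (with the convention `0 log 0 = 0`). -/
def entVN {n : Type*} [Fintype n] [DecidableEq n] (σ : Matrix n n ℂ) : ℝ :=
  -((matFun σ (fun x => x * Real.log x)).trace.re)

/-- α-Renyi entropy `S_α(σ) = (1/(1-α)) log Tr σ^α`. -/
def renyiEnt {n : Type*} [Fintype n] [DecidableEq n] (α : ℝ) (σ : Matrix n n ℂ) : ℝ :=
  (1 - α)⁻¹ * Real.log ((matRpow σ α).trace.re)

end

section Aux

open Matrix

variable {m : Type*} [Fintype m] [DecidableEq m]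

lemma matFun_eq {A : Matrix m m ℂ} (hA : A.IsHermitian) (f : ℝ → ℝ) :
    matFun A f = (hA.eigenvectorUnitary : Matrix m m ℂ) *
      Matrix.diagonal (fun i => (f (hA.eigenvalues i) : ℂ)) *
        (star (hA.eigenvectorUnitary : Matrix m m ℂ)) :=
  dif_pos hA

lemma matFun_mul {A : Matrix m m ℂ} (hA : A.IsHermitian) (f g : ℝ → ℝ) :
    matFun A f * matFun A g = matFun A (fun x => f x * g x) := by
  have h2 : (star (hA.eigenvectorUnitary : Matrix m m ℂ)) *
      (hA.eigenvectorUnitary : Matrix m m ℂ) = 1 := Unitary.coe_star_mul_self _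
  rw [matFun_eq hA f, matFun_eq hA g, matFun_eq hA]
  have e2 : ∀ Z : Matrix m m ℂ, (star (hA.eigenvectorUnitary : Matrix m m ℂ)) *
      ((hA.eigenvectorUnitary : Matrix m m ℂ) * Z) = Z := fun Z => by
    rw [← Matrix.mul_assoc, h2, Matrix.one_mul]
  simp only [Matrix.mul_assoc, e2]
  congr 1
  rw [← Matrix.mul_assoc, Matrix.diagonal_mul_diagonal]
  simp [Complex.ofReal_mul]

lemma matFun_trace {A : Matrix m m ℂ} (hA : A.IsHermitian) (f : ℝ → ℝ) :
    (matFun A f).trace = ((∑ i, f (hA.eigenvalues i) : ℝ) : ℂ) := by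
  have h2 : (star (hA.eigenvectorUnitary : Matrix m m ℂ)) *
      (hA.eigenvectorUnitary : Matrix m m ℂ) = 1 := Unitary.coe_star_mul_self _
  rw [matFun_eq hA f, Matrix.trace_mul_cycle, h2, Matrix.one_mul, Matrix.trace_diagonal]
  push_cast
  rfl

lemma matFun_isHermitian {A : Matrix m m ℂ} (hA : A.IsHermitian) (f : ℝ → ℝ) :
    (matFun A f).IsHermitian := by
  rw [matFun_eq hA f, Matrix.star_eq_conjTranspose]
  refine Matrix.isHermitian_mul_mul_conjTranspose _ ?_
  refine Matrix.isHermitian_diagonal_of_self_adjoint _ ?_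
  ext i
  simp [Pi.star_apply, Complex.conj_ofReal]

lemma matFun_posSemidef {A : Matrix m m ℂ} (hA : A.IsHermitian) (f : ℝ → ℝ)
    (hf : ∀ i, 0 ≤ f (hA.eigenvalues i)) : (matFun A f).PosSemidef := by
  rw [matFun_eq hA f]
  have hD : (Matrix.diagonal (fun i => (f (hA.eigenvalues i) : ℂ))).PosSemidef := by
    refine Matrix.posSemidef_diagonal_iff.mpr fun i => ?_
    rw [Complex.nonneg_iff]
    exact ⟨by simpa using hf i, by simp⟩
  simpa [Matrix.star_eq_conjTranspose] using
    hD.mul_mul_conjTranspose_same (hA.eigenvectorUnitary : Matrix m m ℂ)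

lemma matFun_id {A : Matrix m m ℂ} (hA : A.IsHermitian) :
    matFun A (fun x => x) = A := by
  rw [matFun_eq hA]
  exact (hA.spectral_theorem).symm

lemma matFun_congr {A : Matrix m m ℂ} (hA : A.IsHermitian) {f g : ℝ → ℝ}
    (h : ∀ i, f (hA.eigenvalues i) = g (hA.eigenvalues i)) :
    matFun A f = matFun A g := by
  rw [matFun_eq hA f, matFun_eq hA g]
  congr 1
  congr 1
  exact congrArg _ (funext fun i => congrArg Complex.ofReal (h i))

lemma matFun_one {A : Matrix m m ℂ} (hA : A.IsHermitian) :
    matFun A (fun _ => 1) = 1 := by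
  have h1 : (hA.eigenvectorUnitary : Matrix m m ℂ) *
      (star (hA.eigenvectorUnitary : Matrix m m ℂ)) = 1 := Unitary.coe_mul_star_self _
  rw [matFun_eq hA]
  simpa using h1

lemma matFun_sub {A : Matrix m m ℂ} (hA : A.IsHermitian) (f g : ℝ → ℝ) :
    matFun A f - matFun A g = matFun A (fun x => f x - g x) := by
  rw [matFun_eq hA f, matFun_eq hA g, matFun_eq hA]
  rw [← Matrix.sub_mul, ← Matrix.mul_sub, Matrix.diagonal_sub]
  congr 1
  congr 1
  congr 1
  ext i
  push_cast
  ring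

lemma psd_sqrt_eq_matFun {A : Matrix m m ℂ} (hA : A.PosSemidef) :
    (hA.1.eigenvectorUnitary : Matrix m m ℂ) *
      Matrix.diagonal (((↑) : ℝ → ℂ) ∘ (√·) ∘ hA.1.eigenvalues) *
        (star (hA.1.eigenvectorUnitary : Matrix m m ℂ)) = matFun A Real.sqrt := by
  rw [matFun_eq hA.1]
  rfl

end Aux

section Aux2

open Matrix

variable {m : Type*} [Fintype m] [DecidableEq m]

/-- Euclidean norm of a complex vector. -/
noncomputable def eNorm (v : m → ℂ) : ℝ := ‖(WithLp.equiv 2 (m → ℂ)).symm v‖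

lemma inner_piLp_equiv_symm' {ι : Type*} [Fintype ι] (x y : ι → ℂ) :
    inner ℂ ((WithLp.equiv 2 (ι → ℂ)).symm x) ((WithLp.equiv 2 (ι → ℂ)).symm y) =
      star x ⬝ᵥ y := by
  rw [dotProduct_comm]; rfl

lemma eNorm_nonneg (v : m → ℂ) : 0 ≤ eNorm v := norm_nonneg _

lemma dot_self_eq (v : m → ℂ) : star v ⬝ᵥ v = ((eNorm v ^ 2 : ℝ) : ℂ) := by
  have h := inner_piLp_equiv_symm' v v
  rw [← h, inner_self_eq_norm_sq_to_K, eNorm]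
  norm_cast

lemma dot_abs_le (v w : m → ℂ) : ‖star v ⬝ᵥ w‖ ≤ eNorm v * eNorm w := by
  rw [← inner_piLp_equiv_symm']
  exact norm_inner_le_norm _ _

lemma dot_conj (M : Matrix m m ℂ) (v w : m → ℂ) :
    star v ⬝ᵥ (Mᴴ *ᵥ w) = star (M *ᵥ v) ⬝ᵥ w := by
  rw [Matrix.dotProduct_mulVec, Matrix.star_mulVec]

lemma psd_one_sub_contraction {W : Matrix m m ℂ} (h : (1 - Wᴴ * W).PosSemidef)
    (v : m → ℂ) : eNorm (W *ᵥ v) ≤ eNorm v := by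
  have h2 := h.dotProduct_mulVec_nonneg v
  rw [Matrix.sub_mulVec, dotProduct_sub, Matrix.one_mulVec, ← Matrix.mulVec_mulVec,
    dot_conj, dot_self_eq, dot_self_eq, ← Complex.ofReal_sub, Complex.zero_le_real,
    sub_nonneg] at h2
  nlinarith [eNorm_nonneg (W *ᵥ v), eNorm_nonneg v]

lemma contraction_transfer {W : Matrix m m ℂ} (h : (1 - Wᴴ * W).PosSemidef) :
    (1 - W * Wᴴ).PosSemidef := by
  have hcon := psd_one_sub_contraction h
  refine Matrix.PosSemidef.of_dotProduct_mulVec_nonneg ?_ ?_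
  · simp [Matrix.IsHermitian, Matrix.conjTranspose_sub, Matrix.conjTranspose_mul]
  · intro v
    have hd := dot_conj Wᴴ v (Wᴴ *ᵥ v)
    rw [Matrix.conjTranspose_conjTranspose] at hd
    have key : star v ⬝ᵥ ((W * Wᴴ) *ᵥ v) = star (Wᴴ *ᵥ v) ⬝ᵥ (Wᴴ *ᵥ v) := by
      rw [← Matrix.mulVec_mulVec, hd]
    have h3 : eNorm (Wᴴ *ᵥ v) ^ 2 ≤ eNorm v * eNorm (Wᴴ *ᵥ v) := by
      have e1 : eNorm (Wᴴ *ᵥ v) ^ 2 = (star v ⬝ᵥ (W *ᵥ (Wᴴ *ᵥ v))).re := by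
        rw [hd, dot_self_eq, Complex.ofReal_re]
      rw [e1]
      calc (star v ⬝ᵥ (W *ᵥ (Wᴴ *ᵥ v))).re ≤ ‖star v ⬝ᵥ (W *ᵥ (Wᴴ *ᵥ v))‖ := by
            exact Complex.re_le_norm _
        _ ≤ eNorm v * eNorm (W *ᵥ (Wᴴ *ᵥ v)) := dot_abs_le _ _
        _ ≤ eNorm v * eNorm (Wᴴ *ᵥ v) :=
            mul_le_mul_of_nonneg_left (hcon _) (eNorm_nonneg v)
    have hn : eNorm (Wᴴ *ᵥ v) ≤ eNorm v := by
      nlinarith [eNorm_nonneg (Wᴴ *ᵥ v), eNorm_nonneg v]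
    rw [Matrix.sub_mulVec, dotProduct_sub, Matrix.one_mulVec, key, dot_self_eq,
      dot_self_eq, ← Complex.ofReal_sub, Complex.zero_le_real, sub_nonneg]
    nlinarith [eNorm_nonneg (Wᴴ *ᵥ v), eNorm_nonneg v]

lemma trace_conjTranspose_mul_self_re (A : Matrix m m ℂ) :
    ((Aᴴ * A).trace).re = ∑ j, ∑ i, ‖A i j‖ ^ 2 := by
  rw [Matrix.trace]
  simp only [Matrix.diag_apply, Matrix.mul_apply, Matrix.conjTranspose_apply]
  rw [Complex.re_sum]
  refine Finset.sum_congr rfl fun j _ => ?_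
  rw [Complex.re_sum]
  refine Finset.sum_congr rfl fun i _ => ?_
  rw [Complex.star_def, Complex.sq_norm, Complex.normSq_apply,
    Complex.mul_re, Complex.conj_re, Complex.conj_im]
  ring

lemma psd_trace_re_nonneg {T : Matrix m m ℂ} (hT : T.PosSemidef) : 0 ≤ T.trace.re := by
  rw [Matrix.trace, Complex.re_sum]
  refine Finset.sum_nonneg fun i _ => ?_
  have h := hT.dotProduct_mulVec_nonneg (Pi.single i 1)
  have e : star (Pi.single i 1 : m → ℂ) ⬝ᵥ (T *ᵥ Pi.single i 1) = T i i := by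
    simp [dotProduct, Matrix.mulVec, Pi.single_apply, Finset.mul_sum,
      dotProduct]
  rw [e, Complex.nonneg_iff] at h
  exact h.1

lemma trace_mono {S S' : Matrix m m ℂ} (h : (S' - S).PosSemidef) (B : Matrix m m ℂ) :
    ((Bᴴ * S * B).trace).re ≤ ((Bᴴ * S' * B).trace).re := by
  have h0 := psd_trace_re_nonneg (h.conjTranspose_mul_mul_same B)
  have e : Bᴴ * (S' - S) * B = Bᴴ * S' * B - Bᴴ * S * B := by noncomm_ring
  rw [e, Matrix.trace_sub, Complex.sub_re] at h0
  linarith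

lemma trace_cs (A B : Matrix m m ℂ) :
    ((Aᴴ * B).trace).re ≤
      Real.sqrt ((Aᴴ * A).trace).re * Real.sqrt ((Bᴴ * B).trace).re := by
  classical
  set x : EuclideanSpace ℂ (m × m) :=
    (WithLp.equiv 2 ((m × m) → ℂ)).symm (fun p => A p.1 p.2) with hx
  set y : EuclideanSpace ℂ (m × m) :=
    (WithLp.equiv 2 ((m × m) → ℂ)).symm (fun p => B p.1 p.2) with hy
  have hxy : inner ℂ x y = (Aᴴ * B).trace := by
    rw [hx, hy, inner_piLp_equiv_symm', Matrix.trace]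
    simp only [Matrix.diag_apply, Matrix.mul_apply, Matrix.conjTranspose_apply,
      dotProduct, Fintype.sum_prod_type, Pi.star_apply]
    exact Finset.sum_comm
  have h1 : ‖x‖ = Real.sqrt ((Aᴴ * A).trace).re := by
    rw [EuclideanSpace.norm_eq, trace_conjTranspose_mul_self_re]
    congr 1
    rw [Fintype.sum_prod_type]
    exact Finset.sum_comm
  have h2 : ‖y‖ = Real.sqrt ((Bᴴ * B).trace).re := by
    rw [EuclideanSpace.norm_eq, trace_conjTranspose_mul_self_re]
    congr 1
    rw [Fintype.sum_prod_type]
    exact Finset.sum_comm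
  calc ((Aᴴ * B).trace).re = (inner ℂ x y).re := by rw [hxy]
    _ ≤ ‖inner ℂ x y‖ := by exact Complex.re_le_norm _
    _ ≤ ‖x‖ * ‖y‖ := norm_inner_le_norm _ _
    _ = _ := by rw [h1, h2]

end Aux2

section Aux3

open Matrix

variable {m : Type*} [Fintype m] [DecidableEq m]

lemma diag_entry_form (V Z : Matrix m m ℂ) (i : m) :
    (star V * Z * V) i i = star (fun k => V k i) ⬝ᵥ (Z *ᵥ (fun k => V k i)) := by
  simp only [Matrix.mul_apply, Matrix.mulVec, dotProduct, Matrix.star_apply,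
    Pi.star_apply, Finset.sum_mul, Finset.mul_sum]
  rw [Finset.sum_comm]
  refine Finset.sum_congr rfl fun k _ => Finset.sum_congr rfl fun l _ => ?_
  ring

lemma quad_le_one {Z : Matrix m m ℂ} (hZ : (1 - Z).PosSemidef) {v : m → ℂ}
    (hv : star v ⬝ᵥ v = 1) : (star v ⬝ᵥ (Z *ᵥ v)).re ≤ 1 := by
  have h := hZ.dotProduct_mulVec_nonneg v
  rw [Matrix.sub_mulVec, dotProduct_sub, Matrix.one_mulVec, hv,
    Complex.nonneg_iff] at h
  have h1 := h.1
  rw [Complex.sub_re, Complex.one_re] at h1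
  linarith

lemma key_trace_bound {A : Matrix m m ℂ} (hA : A.IsHermitian) (W : Matrix m m ℂ)
    (h1 : (1 - Wᴴ * W).PosSemidef) (h2 : (1 - W * Wᴴ).PosSemidef)
    (f g ψ : ℝ → ℝ) (c d : ℝ) (hc : 0 ≤ c) (hd : 0 ≤ d)
    (hψ : ∀ i, 0 ≤ ψ (hA.eigenvalues i))
    (hfg : ∀ i j, f (hA.eigenvalues i) * g (hA.eigenvalues j) ≤
      c * ψ (hA.eigenvalues i) + d * ψ (hA.eigenvalues j)) :
    ((Wᴴ * matFun A f * (W * matFun A g)).trace).re ≤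
      (c + d) * ∑ i, ψ (hA.eigenvalues i) := by
  classical
  set lam := hA.eigenvalues with hlam
  set V : Matrix m m ℂ := (hA.eigenvectorUnitary : Matrix m m ℂ) with hV
  have hV1 : V * star V = 1 := Unitary.coe_mul_star_self _
  have hV2 : star V * V = 1 := Unitary.coe_star_mul_self _
  have e1 : ∀ Z : Matrix m m ℂ, V * (star V * Z) = Z := fun Z => by
    rw [← Matrix.mul_assoc, hV1, Matrix.one_mul]
  have e2 : ∀ Z : Matrix m m ℂ, star V * (V * Z) = Z := fun Z => by
    rw [← Matrix.mul_assoc, hV2, Matrix.one_mul]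
  set C : Matrix m m ℂ := star V * W * V with hC
  have hC' : Cᴴ = star V * Wᴴ * V := by
    rw [hC]
    simp [Matrix.conjTranspose_mul, Matrix.star_eq_conjTranspose, Matrix.mul_assoc]
  set Df := Matrix.diagonal (fun i => (f (lam i) : ℂ)) with hDf
  set Dg := Matrix.diagonal (fun i => (g (lam i) : ℂ)) with hDg
  have step1 : Wᴴ * matFun A f * (W * matFun A g) = V * (Cᴴ * Df * (C * Dg)) * star V := by
    rw [matFun_eq hA f, matFun_eq hA g, hC', hC, ← hV, ← hlam, ← hDf, ← hDg]
    simp only [Matrix.mul_assoc, e1, e2]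
  have entry : ∀ i j : m, (star (C i j) * (f (lam i) : ℂ) * (C i j * (g (lam j) : ℂ)))
      = ((Complex.normSq (C i j) * (f (lam i) * g (lam j)) : ℝ) : ℂ) := by
    intro i j
    calc star (C i j) * (f (lam i) : ℂ) * (C i j * (g (lam j) : ℂ))
        = C i j * star (C i j) * ((f (lam i) : ℂ) * (g (lam j) : ℂ)) := by ring
      _ = _ := by
          rw [Complex.star_def, Complex.mul_conj]
          push_cast
          ring
  have step2 : ((Wᴴ * matFun A f * (W * matFun A g)).trace).re =
      ∑ j, ∑ i, Complex.normSq (C i j) * (f (lam i) * g (lam j)) := by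
    rw [step1, Matrix.trace_mul_cycle, ← Matrix.mul_assoc, hV2, Matrix.one_mul,
      Matrix.trace]
    rw [Complex.re_sum]
    refine Finset.sum_congr rfl fun j _ => ?_
    rw [Matrix.diag_apply, Matrix.mul_apply, Complex.re_sum]
    refine Finset.sum_congr rfl fun i _ => ?_
    rw [Matrix.mul_diagonal, Matrix.mul_diagonal, Matrix.conjTranspose_apply, entry i j,
      Complex.ofReal_re]
  -- column sums
  have hunit : ∀ j, star (fun k => V k j) ⬝ᵥ (fun k => V k j) = 1 := by
    intro j
    have h : (star V * V) j j = 1 := by rw [hV2]; simp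
    rw [← h]
    simp [Matrix.mul_apply, dotProduct, Matrix.star_apply]
  have hcol : ∀ j, ∑ i, Complex.normSq (C i j) ≤ 1 := by
    intro j
    have hCC : Cᴴ * C = star V * (Wᴴ * W) * V := by
      rw [hC', hC]
      simp only [Matrix.mul_assoc, e1, e2]
    have hsum : ∑ i, Complex.normSq (C i j) = ((Cᴴ * C) j j).re := by
      rw [Matrix.mul_apply, Complex.re_sum]
      refine Finset.sum_congr rfl fun i _ => ?_
      rw [Matrix.conjTranspose_apply, Complex.star_def, mul_comm, Complex.mul_conj,
        Complex.ofReal_re]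
    rw [hsum, hCC, diag_entry_form]
    exact quad_le_one h1 (hunit j)
  have hrow : ∀ i, ∑ j, Complex.normSq (C i j) ≤ 1 := by
    intro i
    have hCC : C * Cᴴ = star V * (W * Wᴴ) * V := by
      rw [hC', hC]
      simp only [Matrix.mul_assoc, e1, e2]
    have hsum : ∑ j, Complex.normSq (C i j) = ((C * Cᴴ) i i).re := by
      rw [Matrix.mul_apply, Complex.re_sum]
      refine Finset.sum_congr rfl fun j _ => ?_
      rw [Matrix.conjTranspose_apply, Complex.star_def, Complex.mul_conj, Complex.ofReal_re]
    rw [hsum, hCC, diag_entry_form]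
    exact quad_le_one h2 (hunit i)
  -- conclude
  rw [step2]
  have hΨ : 0 ≤ ∑ i, ψ (lam i) := Finset.sum_nonneg fun i _ => hψ i
  calc ∑ j, ∑ i, Complex.normSq (C i j) * (f (lam i) * g (lam j))
      ≤ ∑ j, ∑ i, Complex.normSq (C i j) * (c * ψ (lam i) + d * ψ (lam j)) := by
        refine Finset.sum_le_sum fun j _ => Finset.sum_le_sum fun i _ => ?_
        exact mul_le_mul_of_nonneg_left (hfg i j) (Complex.normSq_nonneg _)
    _ = c * ∑ i, ψ (lam i) * (∑ j, Complex.normSq (C i j))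
        + d * ∑ j, ψ (lam j) * (∑ i, Complex.normSq (C i j)) := by
        simp only [mul_add, Finset.sum_add_distrib]
        congr 1
        · rw [Finset.sum_comm, Finset.mul_sum]
          refine Finset.sum_congr rfl fun i _ => ?_
          rw [Finset.mul_sum, Finset.mul_sum]
          refine Finset.sum_congr rfl fun j _ => ?_
          ring
        · rw [Finset.mul_sum]
          refine Finset.sum_congr rfl fun j _ => ?_
          rw [Finset.mul_sum, Finset.mul_sum]
          refine Finset.sum_congr rfl fun i _ => ?_
          ring
    _ ≤ c * ∑ i, ψ (lam i) + d * ∑ j, ψ (lam j) := by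
        refine add_le_add ?_ ?_
        · refine mul_le_mul_of_nonneg_left ?_ hc
          refine Finset.sum_le_sum fun i _ => ?_
          exact mul_le_of_le_one_right (hψ i) (hrow i)
        · refine mul_le_mul_of_nonneg_left ?_ hd
          refine Finset.sum_le_sum fun j _ => ?_
          exact mul_le_of_le_one_right (hψ j) (hcol j)
    _ = (c + d) * ∑ i, ψ (lam i) := by ring

end Aux3

/-- If `0 ≤ X ≤ Y ≤ I` are `n × n` complex positive semidefinite matrices
and `α > 1`, then `‖X Y^{α-1}‖₁ ≤ Tr Y^α`. -/
theorem stmt_0 (n : ℕ) (hn : 1 ≤ n) (X Y : Matrix (Fin n) (Fin n) ℂ)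
    (hX : X.PosSemidef) (hY : Y.PosSemidef)
    (hXY : (Y - X).PosSemidef) (hYI : ((1 : Matrix (Fin n) (Fin n) ℂ) - Y).PosSemidef)
    (α : ℝ) (hα : 1 < α) :
    traceNorm (X * matRpow Y (α - 1)) ≤ ((matRpow Y α).trace).re := by
  classical
  have hrp : ∀ (A : Matrix (Fin n) (Fin n) ℂ) (c : ℝ), matRpow A c = matFun A (fun x => x ^ c) :=
    fun _ _ => rfl
  have hα0 : (0 : ℝ) < α := lt_trans one_pos hα
  set β : ℝ := (α - 1) / 2 with hβ
  have hβ0 : (0 : ℝ) < β := by rw [hβ]; linarith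
  have hYh : Y.IsHermitian := hY.1
  have hXh : X.IsHermitian := hX.1
  have hlY : ∀ i, 0 ≤ hYh.eigenvalues i := hY.eigenvalues_nonneg
  have hlX : ∀ i, 0 ≤ hXh.eigenvalues i := hX.eigenvalues_nonneg
  set P : Matrix (Fin n) (Fin n) ℂ := matRpow X (1/2 : ℝ) with hPdef
  set R : Matrix (Fin n) (Fin n) ℂ := matRpow Y β with hRdef
  set Q : Matrix (Fin n) (Fin n) ℂ := matRpow Y (α - 1) with hQdef
  set M : Matrix (Fin n) (Fin n) ℂ := X * Q with hMdef
  have hPher : P.IsHermitian := by rw [hPdef, hrp]; exact matFun_isHermitian hXh _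
  have hRher : R.IsHermitian := by rw [hRdef, hrp]; exact matFun_isHermitian hYh _
  have hPX : P * P = X := by
    rw [hPdef, hrp, matFun_mul hXh]
    have hpt : ∀ i, (hXh.eigenvalues i) ^ (1/2 : ℝ) * (hXh.eigenvalues i) ^ (1/2 : ℝ)
        = hXh.eigenvalues i := by
      intro i
      rw [← Real.rpow_add' (hlX i) (by norm_num : (1/2 : ℝ) + 1/2 ≠ 0)]
      norm_num
    rw [matFun_congr hXh (g := fun x => x) (fun i => hpt i), matFun_id hXh]
  have hRQ : R * R = Q := by
    rw [hRdef, hQdef, hrp, hrp, matFun_mul hYh]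
    refine matFun_congr hYh fun i => ?_
    rw [← Real.rpow_add' (hlY i) (by rw [hβ]; intro hcon; nlinarith : β + β ≠ 0)]
    congr 1
    rw [hβ]; ring
  have hRYR : R * (Y * R) = matRpow Y α := by
    conv_lhs => rw [← matFun_id hYh]
    rw [hRdef, hrp, hrp, matFun_mul hYh, matFun_mul hYh]
    refine matFun_congr hYh fun i => ?_
    rcases (hlY i).eq_or_lt with h0 | h0
    · rw [← h0, Real.zero_rpow (by linarith : β ≠ 0), Real.zero_rpow (by linarith : α ≠ 0),
        mul_zero, zero_mul]
    · have e1 : hYh.eigenvalues i * hYh.eigenvalues i ^ β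
          = hYh.eigenvalues i ^ (1 + β) := by
        rw [Real.rpow_add h0, Real.rpow_one]
      rw [e1, ← Real.rpow_add h0]
      congr 1
      rw [hβ]; ring
  -- the partial isometry
  set N : Matrix (Fin n) (Fin n) ℂ := Mᴴ * M with hNdef
  have hN : N.PosSemidef := Matrix.posSemidef_conjTranspose_mul_self M
  have hNh : N.IsHermitian := hN.1
  have hlN : ∀ i, 0 ≤ hNh.eigenvalues i := hN.eigenvalues_nonneg
  set S : Matrix (Fin n) (Fin n) ℂ := matRpow N (-(1/2) : ℝ) with hSdef
  have hSher : S.IsHermitian := by rw [hSdef, hrp]; exact matFun_isHermitian hNh _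
  set W : Matrix (Fin n) (Fin n) ℂ := M * S with hWdef
  have hWconj : Wᴴ = S * Mᴴ := by rw [hWdef, Matrix.conjTranspose_mul, hSher.eq]
  have hWM : Wᴴ * M = matFun N Real.sqrt := by
    rw [hWconj, Matrix.mul_assoc, ← hNdef]
    conv_lhs => rw [← matFun_id hNh]
    rw [hSdef, hrp, matFun_mul hNh]
    refine matFun_congr hNh fun i => ?_
    rcases (hlN i).eq_or_lt with h0 | h0
    · rw [← h0, Real.zero_rpow (by norm_num : -(1/2 : ℝ) ≠ 0), Real.sqrt_zero, zero_mul]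
    · have e1 : hNh.eigenvalues i ^ (-(1/2) : ℝ) * hNh.eigenvalues i
          = hNh.eigenvalues i ^ (-(1/2) + 1 : ℝ) := by
        rw [Real.rpow_add h0, Real.rpow_one]
      rw [e1, Real.sqrt_eq_rpow]
      norm_num
  have htn : traceNorm M = ((Wᴴ * M).trace).re := by
    rw [hWM, traceNorm, psd_sqrt_eq_matFun]
    exact hN
  -- contraction properties
  have h1c : (1 - Wᴴ * W).PosSemidef := by
    have hWW : Wᴴ * W = matFun N (fun x => x ^ (-(1/2) : ℝ) * (x * x ^ (-(1/2) : ℝ))) := by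
      rw [hWconj, hWdef, Matrix.mul_assoc, ← Matrix.mul_assoc Mᴴ M S, ← hNdef]
      conv_lhs => rw [← matFun_id hNh]
      rw [hSdef, hrp, matFun_mul hNh, matFun_mul hNh]
    rw [hWW, ← matFun_one hNh, matFun_sub hNh]
    refine matFun_posSemidef hNh _ fun i => ?_
    rcases (hlN i).eq_or_lt with h0 | h0
    · rw [← h0, Real.zero_rpow (by norm_num : -(1/2 : ℝ) ≠ 0)]
      norm_num
    · have e0 : hNh.eigenvalues i * hNh.eigenvalues i ^ (-(1/2) : ℝ)
          = hNh.eigenvalues i ^ (1 + -(1/2) : ℝ) := by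
        rw [Real.rpow_add h0, Real.rpow_one]
      have e1 : hNh.eigenvalues i ^ (-(1/2) : ℝ) * hNh.eigenvalues i ^ (1 + -(1/2) : ℝ)
          = hNh.eigenvalues i ^ (-(1/2) + (1 + -(1/2)) : ℝ) := (Real.rpow_add h0 _ _).symm
      rw [e0, e1]
      norm_num [Real.rpow_zero]
  have h2c : (1 - W * Wᴴ).PosSemidef := contraction_transfer h1c
  -- the right-hand side
  set τ : ℝ := ∑ i, hYh.eigenvalues i ^ α with hτdef
  have hτeq : ((matRpow Y α).trace).re = τ := by
    rw [hrp, matFun_trace hYh, Complex.ofReal_re]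
  have hτ0 : 0 ≤ τ := Finset.sum_nonneg fun i _ => Real.rpow_nonneg (hlY i) _
  -- Young / doubly substochastic bound
  have hα1 : α - 1 ≠ 0 := by intro hcon; nlinarith
  have hαne : α ≠ 0 := ne_of_gt hα0
  have hkey : ((Wᴴ * matFun Y (fun x => x) * (W * matFun Y (fun x => x ^ (α - 1)))).trace).re
      ≤ τ := by
    have hconj : α.HolderConjugate (α / (α - 1)) :=
      (Real.holderConjugate_iff_eq_conjExponent hα).mpr rfl
    have hfg : ∀ i j, (hYh.eigenvalues i) * (hYh.eigenvalues j ^ (α - 1))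
        ≤ α⁻¹ * hYh.eigenvalues i ^ α + (1 - α⁻¹) * hYh.eigenvalues j ^ α := by
      intro i j
      have hy := Real.young_inequality_of_nonneg (hlY i) (Real.rpow_nonneg (hlY j) (α - 1))
        hconj
      have e2 : (hYh.eigenvalues j ^ (α - 1)) ^ (α / (α - 1)) = hYh.eigenvalues j ^ α := by
        rw [← Real.rpow_mul (hlY j)]
        congr 1
        field_simp
      rw [e2] at hy
      have e3 : hYh.eigenvalues i ^ α / α = α⁻¹ * hYh.eigenvalues i ^ α := by ring
      have e4 : hYh.eigenvalues j ^ α / (α / (α - 1))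
          = (1 - α⁻¹) * hYh.eigenvalues j ^ α := by
        rw [div_div_eq_mul_div]
        field_simp
      rw [e3, e4] at hy
      exact hy
    have hd0 : (0:ℝ) ≤ 1 - α⁻¹ := by
      have : α⁻¹ ≤ 1 := by
        rw [inv_le_one_iff₀]
        right; linarith
      linarith
    have hb := key_trace_bound hYh W h1c h2c (fun x => x) (fun x => x ^ (α - 1))
      (fun x => x ^ α) α⁻¹ (1 - α⁻¹) (by positivity) hd0
      (fun i => Real.rpow_nonneg (hlY i) α) hfg
    refine le_trans hb (le_of_eq ?_)
    rw [hτdef]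
    ring
  -- Cauchy-Schwarz assembly
  set A' : Matrix (Fin n) (Fin n) ℂ := P * (W * R) with hA'def
  set B' : Matrix (Fin n) (Fin n) ℂ := P * R with hB'def
  have eA : A'ᴴ * A' = (W * R)ᴴ * X * (W * R) := by
    rw [hA'def, Matrix.conjTranspose_mul, hPher.eq, ← hPX]
    noncomm_ring
  have eB : B'ᴴ * B' = Rᴴ * X * R := by
    rw [hB'def, Matrix.conjTranspose_mul, hPher.eq, ← hPX]
    noncomm_ring
  have tB : ((B'ᴴ * B').trace).re ≤ τ := by
    calc ((B'ᴴ * B').trace).re ≤ ((Rᴴ * Y * R).trace).re := by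
          rw [eB]; exact trace_mono hXY R
      _ = τ := by rw [hRher.eq, Matrix.mul_assoc, hRYR, hτeq]
  have tA : ((A'ᴴ * A').trace).re ≤ τ := by
    have step : ((A'ᴴ * A').trace).re ≤ (((W * R)ᴴ * Y * (W * R)).trace).re := by
      rw [eA]; exact trace_mono hXY (W * R)
    refine le_trans step ?_
    have etr : ((W * R)ᴴ * Y * (W * R)).trace
        = (Wᴴ * matFun Y (fun x => x) * (W * matFun Y (fun x => x ^ (α - 1)))).trace := by
      rw [matFun_id hYh]
      have hQ' : matFun Y (fun x => x ^ (α - 1)) = Q := by rw [hQdef, hrp]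
      rw [hQ', ← hRQ, Matrix.conjTranspose_mul, hRher.eq]
      simp only [Matrix.mul_assoc]
      rw [Matrix.trace_mul_comm]
      simp only [Matrix.mul_assoc]
    rw [etr]
    exact hkey
  have htr2 : ((Wᴴ * M).trace).re = ((A'ᴴ * B').trace).re := by
    have e : (A'ᴴ * B').trace = (Wᴴ * M).trace := by
      rw [hA'def, hB'def, Matrix.conjTranspose_mul, Matrix.conjTranspose_mul, hPher.eq,
        hRher.eq, hMdef, ← hPX, ← hRQ]
      simp only [Matrix.mul_assoc]
      rw [Matrix.trace_mul_comm]
      simp only [Matrix.mul_assoc]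
    rw [e]
  calc traceNorm M = ((Wᴴ * M).trace).re := htn
    _ = ((A'ᴴ * B').trace).re := htr2
    _ ≤ Real.sqrt ((A'ᴴ * A').trace).re * Real.sqrt ((B'ᴴ * B').trace).re := trace_cs A' B'
    _ ≤ Real.sqrt τ * Real.sqrt τ :=
        mul_le_mul (Real.sqrt_le_sqrt tA) (Real.sqrt_le_sqrt tB) (Real.sqrt_nonneg _)
          (Real.sqrt_nonneg _)
    _ = τ := Real.mul_self_sqrt hτ0
    _ = ((matRpow Y α).trace).re := hτeq.symm
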